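/- Let 𝒲 be a quaternion linear space of functions D → ℍ invariant under quaternion conjugation and let f ∈ 𝒲. Then f is quaternion conjugate phase retrieval in 𝒲 if and only if there do not exist u, v ∈ 𝒲 such that (i) f = u + v, (ii) Re(u(x)·v(x)*) = 0 for all x ∈ D, and (iii) Re(u(x)·v(y)* + u(y)·v(x)*) ≠ 0 for some x, y ∈ D. -/

import Mathlib

open Quaternion

/-- The quaternion unit `i`. -/
def quatI : Quaternion ℝ := ⟨0, 1, 0, 0⟩
/-- The quaternion unit `j`. -/
def quatJ : Quaternion ℝ := ⟨0, 0, 1, 0⟩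
/-- The quaternion unit `k`. -/
def quatK : Quaternion ℝ := ⟨0, 0, 0, 1⟩

/-- The real component `f₁ = (f + f*)/2` of a quaternion-valued function. -/
noncomputable def quatComp1 {D : Type*} (f : D → Quaternion ℝ) : D → Quaternion ℝ :=
  fun x => (f x + star (f x)) / 2
/-- The `i`-component `f₂ = (-i f - (i f)*)/2` of a quaternion-valued function. -/
noncomputable def quatComp2 {D : Type*} (f : D → Quaternion ℝ) : D → Quaternion ℝ :=
  fun x => (-(quatI * f x) - star (quatI * f x)) / 2
/-- The `j`-component `f₃ = (-j f - (j f)*)/2` of a quaternion-valued function. -/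
noncomputable def quatComp3 {D : Type*} (f : D → Quaternion ℝ) : D → Quaternion ℝ :=
  fun x => (-(quatJ * f x) - star (quatJ * f x)) / 2
/-- The `k`-component `f₄ = (-k f - (k f)*)/2` of a quaternion-valued function. -/
noncomputable def quatComp4 {D : Type*} (f : D → Quaternion ℝ) : D → Quaternion ℝ :=
  fun x => (-(quatK * f x) - star (quatK * f x)) / 2

open scoped RealInnerProductSpace

@[simp] lemma quatI_re : quatI.re = 0 := rfl
@[simp] lemma quatI_imI : quatI.imI = 1 := rfl
@[simp] lemma quatI_imJ : quatI.imJ = 0 := rfl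
@[simp] lemma quatI_imK : quatI.imK = 0 := rfl
@[simp] lemma quatJ_re : quatJ.re = 0 := rfl
@[simp] lemma quatJ_imI : quatJ.imI = 0 := rfl
@[simp] lemma quatJ_imJ : quatJ.imJ = 1 := rfl
@[simp] lemma quatJ_imK : quatJ.imK = 0 := rfl
@[simp] lemma quatK_re : quatK.re = 0 := rfl
@[simp] lemma quatK_imI : quatK.imI = 0 := rfl
@[simp] lemma quatK_imJ : quatK.imJ = 0 := rfl
@[simp] lemma quatK_imK : quatK.imK = 1 := rfl

lemma quat_norm_eq_iff (a b : ℍ) : ‖a‖ = ‖b‖ ↔ normSq a = normSq b := by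
  rw [normSq_eq_norm_mul_self, normSq_eq_norm_mul_self]
  constructor
  · intro h; rw [h]
  · intro h; nlinarith [norm_nonneg a, norm_nonneg b]

lemma quat_two : (2 : ℍ) = ((2:ℝ) : ℍ) := by
  have h := Quaternion.coe_natCast (R := ℝ) 2
  norm_num at h
  exact h.symm

lemma quat_div_two (a : ℍ) : a / 2 = (2⁻¹ : ℝ) • a := by
  rw [div_eq_mul_inv, quat_two, ← Quaternion.coe_inv, Quaternion.mul_coe_eq_smul]

lemma comp1_eq {D : Type*} (f : D → ℍ) (x : D) : quatComp1 f x = ((f x).re : ℍ) := by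
  simp only [quatComp1, quat_div_two]
  ext <;> simp <;> ring

lemma comp2_eq {D : Type*} (f : D → ℍ) (x : D) : quatComp2 f x = ((f x).imI : ℍ) := by
  simp only [quatComp2, quat_div_two]
  ext <;> simp [Quaternion.re_mul, Quaternion.imI_mul, Quaternion.imJ_mul,
    Quaternion.imK_mul] <;> ring

lemma comp3_eq {D : Type*} (f : D → ℍ) (x : D) : quatComp3 f x = ((f x).imJ : ℍ) := by
  simp only [quatComp3, quat_div_two]
  ext <;> simp [Quaternion.re_mul, Quaternion.imI_mul, Quaternion.imJ_mul,
    Quaternion.imK_mul] <;> ring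

lemma comp4_eq {D : Type*} (f : D → ℍ) (x : D) : quatComp4 f x = ((f x).imK : ℍ) := by
  simp only [quatComp4, quat_div_two]
  ext <;> simp [Quaternion.re_mul, Quaternion.imI_mul, Quaternion.imJ_mul,
    Quaternion.imK_mul] <;> ring

lemma inner_comp (a b : ℍ) : ⟪a, b⟫ = a.re*b.re + a.imI*b.imI + a.imJ*b.imJ + a.imK*b.imK := by
  rw [Quaternion.inner_def]
  simp [Quaternion.re_mul]

lemma unit_sq {q : ℍ} (h : ‖q‖ = 1) : q.re^2 + q.imI^2 + q.imJ^2 + q.imK^2 = 1 := by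
  have h2 : normSq q = normSq (1 : ℍ) := (quat_norm_eq_iff q 1).1 (by simp [h])
  simpa [Quaternion.normSq_def'] using h2

lemma ortho_sum {p q : ℍ} (h : p * star q + q * star p = 0) :
    p.re*q.re + p.imI*q.imI + p.imJ*q.imJ + p.imK*q.imK = 0 := by
  have := congrArg QuaternionAlgebra.re h
  simp [Quaternion.re_mul] at this
  linarith

lemma add_star_eq (a b : ℍ) : a * star b + b * star a = ((2 * ⟪a,b⟫ : ℝ) : ℍ) := by
  rw [inner_comp]
  ext <;> simp [Quaternion.re_mul, Quaternion.imI_mul, Quaternion.imJ_mul,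
    Quaternion.imK_mul] <;> ring

lemma combo_inner (q₁ q₂ q₃ q₄ : ℍ)
    (h₁ : ‖q₁‖ = 1) (h₂ : ‖q₂‖ = 1) (h₃ : ‖q₃‖ = 1) (h₄ : ‖q₄‖ = 1)
    (o₁₂ : q₁ * star q₂ + q₂ * star q₁ = 0) (o₁₃ : q₁ * star q₃ + q₃ * star q₁ = 0)
    (o₁₄ : q₁ * star q₄ + q₄ * star q₁ = 0) (o₂₃ : q₂ * star q₃ + q₃ * star q₂ = 0)
    (o₂₄ : q₂ * star q₄ + q₄ * star q₂ = 0) (o₃₄ : q₃ * star q₄ + q₄ * star q₃ = 0)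
    (a b : ℍ) :
    ⟪q₁ * (a.re:ℍ) + q₂ * (a.imI:ℍ) + q₃ * (a.imJ:ℍ) + q₄ * (a.imK:ℍ),
     q₁ * (b.re:ℍ) + q₂ * (b.imI:ℍ) + q₃ * (b.imJ:ℍ) + q₄ * (b.imK:ℍ)⟫ = ⟪a, b⟫ := by
  have u₁ := unit_sq h₁; have u₂ := unit_sq h₂; have u₃ := unit_sq h₃; have u₄ := unit_sq h₄
  have s₁₂ := ortho_sum o₁₂; have s₁₃ := ortho_sum o₁₃; have s₁₄ := ortho_sum o₁₄
  have s₂₃ := ortho_sum o₂₃; have s₂₄ := ortho_sum o₂₄; have s₃₄ := ortho_sum o₃₄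
  simp only [inner_comp, Quaternion.re_add, Quaternion.imI_add, Quaternion.imJ_add,
    Quaternion.imK_add, Quaternion.re_mul, Quaternion.imI_mul, Quaternion.imJ_mul,
    Quaternion.imK_mul, Quaternion.re_coe, Quaternion.imI_coe, Quaternion.imJ_coe,
    Quaternion.imK_coe]
  linear_combination (a.re*b.re)*u₁ + (a.imI*b.imI)*u₂ + (a.imJ*b.imJ)*u₃ + (a.imK*b.imK)*u₄
    + (a.re*b.imI + a.imI*b.re)*s₁₂ + (a.re*b.imJ + a.imJ*b.re)*s₁₃
    + (a.re*b.imK + a.imK*b.re)*s₁₄ + (a.imI*b.imJ + a.imJ*b.imI)*s₂₃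
    + (a.imI*b.imK + a.imK*b.imI)*s₂₄ + (a.imJ*b.imK + a.imK*b.imJ)*s₃₄

lemma exists_isometry {D : Type*} (f g : D → ℍ)
    (hG : ∀ x y, ⟪g x, g y⟫ = ⟪f x, f y⟫) :
    ∃ U : ℍ →ₗᵢ[ℝ] ℍ, ∀ x, U (f x) = g x := by
  classical
  set L := Finsupp.linearCombination ℝ f with hL
  set L' := Finsupp.linearCombination ℝ g with hL'
  have expand : ∀ (h : D → ℍ) (w w' : D →₀ ℝ),
      ⟪Finsupp.linearCombination ℝ h w, Finsupp.linearCombination ℝ h w'⟫ =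
        ∑ x ∈ w.support, ∑ y ∈ w'.support, w x * w' y * ⟪h x, h y⟫ := by
    intro h w w'
    rw [Finsupp.linearCombination_apply, Finsupp.linearCombination_apply, Finsupp.sum,
      Finsupp.sum, sum_inner]
    refine Finset.sum_congr rfl fun x _ => ?_
    rw [inner_sum]
    refine Finset.sum_congr rfl fun y _ => ?_
    rw [real_inner_smul_left, real_inner_smul_right]; ring
  have key : ∀ w w' : D →₀ ℝ, ⟪L' w, L' w'⟫ = ⟪L w, L w'⟫ := by
    intro w w'
    rw [hL, hL', expand, expand]
    exact Finset.sum_congr rfl fun x _ => Finset.sum_congr rfl fun y _ => by rw [hG]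
  have hker : LinearMap.ker L ≤ LinearMap.ker L' := by
    intro w hw
    rw [LinearMap.mem_ker] at hw ⊢
    have h0 : ⟪L' w, L' w⟫ = (0:ℝ) := by rw [key, hw, inner_zero_left]
    exact inner_self_eq_zero.mp h0
  set T : ↥(LinearMap.range L) →ₗ[ℝ] ℍ :=
    ((LinearMap.ker L).liftQ L' hker).comp L.quotKerEquivRange.symm.toLinearMap with hT
  have hTapp : ∀ (w : D →₀ ℝ) (hm : L w ∈ LinearMap.range L), T ⟨L w, hm⟩ = L' w := by
    intro w hm
    have h1 : L.quotKerEquivRange (Submodule.Quotient.mk w) = ⟨L w, hm⟩ :=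
      Subtype.ext (L.quotKerEquivRange_apply_mk w)
    rw [hT]
    simp only [LinearMap.comp_apply, LinearEquiv.coe_toLinearMap, ← h1,
      LinearEquiv.symm_apply_apply, Submodule.liftQ_apply]
  have hTinner : ∀ s t : ↥(LinearMap.range L), ⟪T s, T t⟫ = ⟪s, t⟫ := by
    intro s t
    obtain ⟨w, hw⟩ := s.2
    obtain ⟨w', hw'⟩ := t.2
    have hs : s = ⟨L w, LinearMap.mem_range_self L w⟩ := Subtype.ext hw.symm
    have ht : t = ⟨L w', LinearMap.mem_range_self L w'⟩ := Subtype.ext hw'.symm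
    rw [hs, ht, hTapp, hTapp, key, Submodule.coe_inner]
  set Tiso : ↥(LinearMap.range L) →ₗᵢ[ℝ] ℍ := T.isometryOfInner hTinner with hTiso
  refine ⟨Tiso.extend, fun x => ?_⟩
  have hfx : f x = L (Finsupp.single x 1) := by
    rw [hL, Finsupp.linearCombination_single, one_smul]
  have hmem : f x ∈ LinearMap.range L := ⟨Finsupp.single x 1, hfx.symm⟩
  have h2 := Tiso.extend_apply ⟨f x, hmem⟩
  have h3 : Tiso ⟨f x, hmem⟩ = g x := by
    have hs : (⟨f x, hmem⟩ : ↥(LinearMap.range L)) = ⟨L (Finsupp.single x 1), LinearMap.mem_range_self L _⟩ :=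
      Subtype.ext hfx
    have hc := congrFun (T.coe_isometryOfInner hTinner) (⟨f x, hmem⟩ : ↥(LinearMap.range L))
    rw [hTiso, hc, hs, hTapp, hL', Finsupp.linearCombination_single, one_smul]
  exact h2.trans h3

lemma normSq_sub_eq {a b : ℍ} (h : (a * star b).re = 0) : normSq (a - b) = normSq (a + b) := by
  have h' : a.re*b.re + a.imI*b.imI + a.imJ*b.imJ + a.imK*b.imK = 0 := by
    simpa [Quaternion.re_mul] using h
  simp only [Quaternion.normSq_def', Quaternion.re_sub, Quaternion.imI_sub, Quaternion.imJ_sub,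
    Quaternion.imK_sub, Quaternion.re_add, Quaternion.imI_add, Quaternion.imJ_add,
    Quaternion.imK_add]
  linear_combination (-4 : ℝ) * h'

lemma re_cross {a b c d : ℍ} (h : ⟪a - b, c - d⟫ = ⟪a + b, c + d⟫) :
    (a * star d + c * star b).re = 0 := by
  simp only [inner_comp, Quaternion.re_sub, Quaternion.imI_sub, Quaternion.imJ_sub,
    Quaternion.imK_sub, Quaternion.re_add, Quaternion.imI_add, Quaternion.imJ_add,
    Quaternion.imK_add] at h
  simp only [Quaternion.re_add, Quaternion.re_mul, Quaternion.re_star, Quaternion.imI_star,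
    Quaternion.imJ_star, Quaternion.imK_star]
  linear_combination (-(1:ℝ)/2) * h

lemma perp_half {a b : ℍ} (h : normSq b = normSq a) :
    (((((2:ℝ)⁻¹ : ℝ) : ℍ) * (a + b)) * star ((((2:ℝ)⁻¹ : ℝ) : ℍ) * (a - b))).re = 0 := by
  have h' := h
  simp only [Quaternion.normSq_def'] at h'
  simp only [Quaternion.re_mul, Quaternion.imI_mul, Quaternion.imJ_mul, Quaternion.imK_mul,
    Quaternion.re_star, Quaternion.imI_star, Quaternion.imJ_star, Quaternion.imK_star,
    Quaternion.re_coe, Quaternion.imI_coe, Quaternion.imJ_coe, Quaternion.imK_coe,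
    Quaternion.re_add, Quaternion.imI_add, Quaternion.imJ_add, Quaternion.imK_add,
    Quaternion.re_sub, Quaternion.imI_sub, Quaternion.imJ_sub, Quaternion.imK_sub]
  linear_combination (-(1:ℝ)/4) * h'

lemma gram_from_re {a b c d : ℍ}
    (h : (((((2:ℝ)⁻¹ : ℝ) : ℍ) * (a + b)) * star ((((2:ℝ)⁻¹ : ℝ) : ℍ) * (c - d)) +
          ((((2:ℝ)⁻¹ : ℝ) : ℍ) * (c + d)) * star ((((2:ℝ)⁻¹ : ℝ) : ℍ) * (a - b))).re = 0) :
    ⟪b, d⟫ = ⟪a, c⟫ := by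
  simp only [Quaternion.re_mul, Quaternion.imI_mul, Quaternion.imJ_mul, Quaternion.imK_mul,
    Quaternion.re_star, Quaternion.imI_star, Quaternion.imJ_star, Quaternion.imK_star,
    Quaternion.re_coe, Quaternion.imI_coe, Quaternion.imJ_coe, Quaternion.imK_coe,
    Quaternion.re_add, Quaternion.imI_add, Quaternion.imJ_add, Quaternion.imK_add,
    Quaternion.re_sub, Quaternion.imI_sub, Quaternion.imJ_sub, Quaternion.imK_sub] at h
  simp only [inner_comp]
  linear_combination (-2:ℝ) * h

lemma norm_quatI : ‖quatI‖ = 1 := by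
  rw [show (1:ℝ) = ‖(1:ℍ)‖ from norm_one.symm, quat_norm_eq_iff]
  simp [Quaternion.normSq_def']

lemma norm_quatJ : ‖quatJ‖ = 1 := by
  rw [show (1:ℝ) = ‖(1:ℍ)‖ from norm_one.symm, quat_norm_eq_iff]
  simp [Quaternion.normSq_def']

lemma norm_quatK : ‖quatK‖ = 1 := by
  rw [show (1:ℝ) = ‖(1:ℍ)‖ from norm_one.symm, quat_norm_eq_iff]
  simp [Quaternion.normSq_def']

lemma inner_one_quatI : ⟪(1:ℍ), quatI⟫ = 0 := by simp [inner_comp]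
lemma inner_one_quatJ : ⟪(1:ℍ), quatJ⟫ = 0 := by simp [inner_comp]
lemma inner_one_quatK : ⟪(1:ℍ), quatK⟫ = 0 := by simp [inner_comp]
lemma inner_quatI_quatJ : ⟪quatI, quatJ⟫ = 0 := by simp [inner_comp]
lemma inner_quatI_quatK : ⟪quatI, quatK⟫ = 0 := by simp [inner_comp]
lemma inner_quatJ_quatK : ⟪quatJ, quatK⟫ = 0 := by simp [inner_comp]

lemma U_ortho (U : ℍ →ₗᵢ[ℝ] ℍ) {a b : ℍ} (h : ⟪a, b⟫ = 0) :
    U a * star (U b) + U b * star (U a) = 0 := by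
  rw [add_star_eq, U.inner_map_map, h]
  simp


/-- **Theorem 2.10(i) (quaternion conjugate phase retrieval of a function).**
Let `W` be a quaternion linear space of functions `D → ℍ` invariant under quaternion
conjugation, and `f ∈ W`.  Then `f` is quaternion conjugate phase retrieval in `W` iff
there do not exist `u, v ∈ W` with `f = u + v`, `Re (u x · v x*) = 0` for all `x`, and
`Re (u x · v y* + u y · v x*) ≠ 0` for some `x, y`. -/
theorem stmt_9 {D : Type*} [Nonempty D] (W : AddSubgroup (D → Quaternion ℝ))
    (hmul : ∀ q : Quaternion ℝ, ∀ f ∈ W, (fun x => q * f x) ∈ W)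
    (hstar : ∀ q : Quaternion ℝ, ∀ f ∈ W, (fun x => star (q * f x)) ∈ W)
    (f : D → Quaternion ℝ) (hf : f ∈ W) :
    ({g : D → Quaternion ℝ | g ∈ W ∧ ∀ x, ‖g x‖ = ‖f x‖} =
        {g : D → Quaternion ℝ | g ∈ W ∧ ∃ q₁ q₂ q₃ q₄ : Quaternion ℝ,
          ‖q₁‖ = 1 ∧ ‖q₂‖ = 1 ∧ ‖q₃‖ = 1 ∧ ‖q₄‖ = 1 ∧
          q₁ * star q₂ + q₂ * star q₁ = 0 ∧ q₁ * star q₃ + q₃ * star q₁ = 0 ∧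
          q₁ * star q₄ + q₄ * star q₁ = 0 ∧ q₂ * star q₃ + q₃ * star q₂ = 0 ∧
          q₂ * star q₄ + q₄ * star q₂ = 0 ∧ q₃ * star q₄ + q₄ * star q₃ = 0 ∧
          g = fun x => q₁ * quatComp1 f x + q₂ * quatComp2 f x +
            q₃ * quatComp3 f x + q₄ * quatComp4 f x}) ↔
      ¬ ∃ u ∈ W, ∃ v ∈ W, f = u + v ∧
          (∀ x, (u x * star (v x)).re = 0) ∧
          (∃ x y, (u x * star (v y) + u y * star (v x)).re ≠ 0) := by
  constructor
  · rintro hEq ⟨u, hu, v, hv, hfuv, hperp, x0, y0, hxy⟩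
    have hgW : u - v ∈ W := W.sub_mem hu hv
    have hnorm : ∀ x, ‖(u - v) x‖ = ‖f x‖ := by
      intro x
      have hfx : f x = u x + v x := by rw [hfuv]; rfl
      rw [quat_norm_eq_iff, hfx]
      exact normSq_sub_eq (hperp x)
    have hmem : (u - v) ∈ {g : D → Quaternion ℝ | g ∈ W ∧ ∀ x, ‖g x‖ = ‖f x‖} := ⟨hgW, hnorm⟩
    rw [hEq] at hmem
    obtain ⟨-, q₁, q₂, q₃, q₄, h₁, h₂, h₃, h₄, o₁₂, o₁₃, o₁₄, o₂₃, o₂₄, o₃₄, hgeq⟩ := hmem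
    have hGxy : ∀ x y, ⟪(u - v) x, (u - v) y⟫ = ⟪f x, f y⟫ := by
      intro x y
      have hx := congrFun hgeq x
      have hy := congrFun hgeq y
      simp only [comp1_eq, comp2_eq, comp3_eq, comp4_eq] at hx hy
      rw [hx, hy]
      exact combo_inner _ _ _ _ h₁ h₂ h₃ h₄ o₁₂ o₁₃ o₁₄ o₂₃ o₂₄ o₃₄ (f x) (f y)
    refine hxy ?_
    have hG := hGxy x0 y0
    have hfx0 : f x0 = u x0 + v x0 := by rw [hfuv]; rfl
    have hfy0 : f y0 = u y0 + v y0 := by rw [hfuv]; rfl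
    rw [hfx0, hfy0] at hG
    exact re_cross hG
  · intro hNo
    ext g
    simp only [Set.mem_setOf_eq]
    constructor
    · rintro ⟨hgW, hnorm⟩
      refine ⟨hgW, ?_⟩
      set u : D → ℍ := fun x => (((2:ℝ)⁻¹ : ℝ) : ℍ) * ((f + g) x) with hu
      set v : D → ℍ := fun x => (((2:ℝ)⁻¹ : ℝ) : ℍ) * ((f - g) x) with hv
      have huW : u ∈ W := hmul _ _ (W.add_mem hf hgW)
      have hvW : v ∈ W := hmul _ _ (W.sub_mem hf hgW)
      have hfuv : f = u + v := by
        funext x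
        show f x = (((2:ℝ)⁻¹ : ℝ) : ℍ) * (f x + g x) + (((2:ℝ)⁻¹ : ℝ) : ℍ) * (f x - g x)
        ext <;>
          · simp only [Quaternion.re_mul, Quaternion.imI_mul, Quaternion.imJ_mul,
              Quaternion.imK_mul, Quaternion.re_coe, Quaternion.imI_coe, Quaternion.imJ_coe,
              Quaternion.imK_coe, Quaternion.re_add, Quaternion.imI_add, Quaternion.imJ_add,
              Quaternion.imK_add, Quaternion.re_sub, Quaternion.imI_sub, Quaternion.imJ_sub,
              Quaternion.imK_sub]
            ring
      have hperp : ∀ x, (u x * star (v x)).re = 0 := fun x =>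
        perp_half ((quat_norm_eq_iff _ _).1 (hnorm x))
      have hRe : ∀ x y, (u x * star (v y) + u y * star (v x)).re = 0 := by
        by_contra hcon
        push_neg at hcon
        exact hNo ⟨u, huW, v, hvW, hfuv, hperp, hcon⟩
      have hG : ∀ x y, ⟪g x, g y⟫ = ⟪f x, f y⟫ := fun x y => gram_from_re (hRe x y)
      obtain ⟨U, hU⟩ := exists_isometry f g hG
      refine ⟨U 1, U quatI, U quatJ, U quatK,
        by rw [U.norm_map]; exact norm_one,
        by rw [U.norm_map]; exact norm_quatI,
        by rw [U.norm_map]; exact norm_quatJ,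
        by rw [U.norm_map]; exact norm_quatK,
        U_ortho U inner_one_quatI, U_ortho U inner_one_quatJ, U_ortho U inner_one_quatK,
        U_ortho U inner_quatI_quatJ, U_ortho U inner_quatI_quatK, U_ortho U inner_quatJ_quatK,
        ?_⟩
      funext x
      show g x = U 1 * quatComp1 f x + U quatI * quatComp2 f x + U quatJ * quatComp3 f x +
        U quatK * quatComp4 f x
      rw [comp1_eq, comp2_eq, comp3_eq, comp4_eq, Quaternion.mul_coe_eq_smul,
        Quaternion.mul_coe_eq_smul, Quaternion.mul_coe_eq_smul, Quaternion.mul_coe_eq_smul]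
      have hfx : (f x).re • (1:ℍ) + (f x).imI • quatI + (f x).imJ • quatJ +
          (f x).imK • quatK = f x := by
        ext <;> simp
      have expand : U (f x) = (f x).re • U 1 + (f x).imI • U quatI + (f x).imJ • U quatJ +
          (f x).imK • U quatK := by
        conv_lhs => rw [← hfx]
        simp only [map_add, map_smul]
      exact (hU x).symm.trans expand
    · rintro ⟨hgW, q₁, q₂, q₃, q₄, h₁, h₂, h₃, h₄, o₁₂, o₁₃, o₁₄, o₂₃, o₂₄, o₃₄, hgeq⟩
      refine ⟨hgW, fun x => ?_⟩
      have hx := congrFun hgeq x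
      simp only [comp1_eq, comp2_eq, comp3_eq, comp4_eq] at hx
      rw [hx, quat_norm_eq_iff, ← Quaternion.inner_self, ← Quaternion.inner_self]
      exact combo_inner _ _ _ _ h₁ h₂ h₃ h₄ o₁₂ o₁₃ o₁₄ o₂₃ o₂₄ o₃₄ (f x) (f x)
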